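/- Let A and B be n×n real symmetric positive-definite matrices, and let φ(t) = B^{1/2} (B^{-1/2} A B^{-1/2})^t B^{1/2} be the geodesic from B to A. Then the velocity at t = 1 satisfies φ'(1) = -A^{1/2} log(A^{-1/2} B A^{-1/2}) A^{1/2} = -Log_A(B). -/

import Mathlib

open Matrix

attribute [local instance] Matrix.frobeniusNormedAddCommGroup Matrix.frobeniusNormedSpace
attribute [local instance] Matrix.frobeniusNormedRing Matrix.frobeniusNormedAlgebra

/-- The geodesic `φ(t) = B^{1/2} (B^{-1/2} A B^{-1/2})^t B^{1/2}` from `B` to `A`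
has velocity at `t = 1` equal to `-A^{1/2} log (A^{-1/2} B A^{-1/2}) A^{1/2} = -Log_A(B)`. -/
theorem stmt_6 (n : ℕ) (A B sA sB Lc L' : Matrix (Fin n) (Fin n) ℝ)
    (hA : A.PosDef) (hB : B.PosDef)
    (hsA : sA.PosDef) (hsA2 : sA * sA = A)
    (hsB : sB.PosDef) (hsB2 : sB * sB = B)
    (hLc : Lc.IsSymm) (hexpC : NormedSpace.exp Lc = sB⁻¹ * A * sB⁻¹)
    (hL' : L'.IsSymm) (hexpL' : NormedSpace.exp L' = sA⁻¹ * B * sA⁻¹) :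
    HasDerivAt (fun t : ℝ => sB * NormedSpace.exp (t • Lc) * sB)
      (-(sA * L' * sA)) 1 := by
  classical
  have hsAu : IsUnit sA := hsA.isUnit
  have hsBu : IsUnit sB := hsB.isUnit
  have := hsAu.invertible
  have := hsBu.invertible
  have hAinv : A⁻¹ = sA⁻¹ * sA⁻¹ := by rw [← hsA2, Matrix.mul_inv_rev]
  have hsAT : sAᵀ = sA := by
    rw [← Matrix.conjTranspose_eq_transpose_of_trivial]; exact hsA.isHermitian
  have hsBT : sBᵀ = sB := by
    rw [← Matrix.conjTranspose_eq_transpose_of_trivial]; exact hsB.isHermitian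
  -- the candidate for L'
  set X : Matrix (Fin n) (Fin n) ℝ := -(sA⁻¹ * sB * Lc * sB⁻¹ * sA) with hXdef
  -- exp of X
  have hexpnegLc : NormedSpace.exp (-Lc) = sB * A⁻¹ * sB := by
    rw [Matrix.exp_neg, hexpC]
    simp [Matrix.mul_inv_rev, Matrix.inv_inv_of_invertible, mul_assoc]
  have hexpX : NormedSpace.exp X = NormedSpace.exp L' := by
    have hC : IsUnit (sA⁻¹ * sB) := hsA.inv.isUnit.mul hsBu
    have h1 : X = (sA⁻¹ * sB) * (-Lc) * (sA⁻¹ * sB)⁻¹ := by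
      rw [Matrix.mul_inv_rev, Matrix.inv_inv_of_invertible, hXdef]
      noncomm_ring
    rw [h1, Matrix.exp_conj _ _ hC, hexpnegLc, hexpL',
      Matrix.mul_inv_rev, Matrix.inv_inv_of_invertible, hAinv]
    calc sA⁻¹ * sB * (sB * (sA⁻¹ * sA⁻¹) * sB) * (sB⁻¹ * sA)
        = sA⁻¹ * (sB * sB) * (sA⁻¹ * (sA⁻¹ * (sA * (sB * (sB⁻¹ * sA)) * sA⁻¹))) := by
          simp [mul_assoc, Matrix.mul_inv_cancel_left_of_invertible,
            Matrix.inv_mul_cancel_left_of_invertible]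
      _ = sA⁻¹ * B * sA⁻¹ := by
          rw [hsB2]
          simp [mul_assoc, Matrix.mul_inv_cancel_left_of_invertible,
            Matrix.inv_mul_cancel_left_of_invertible]
  -- commutation fact
  have hcomm : (sB⁻¹ * (sA * sA) * sB⁻¹) * Lc = Lc * (sB⁻¹ * (sA * sA) * sB⁻¹) := by
    have h := ((Commute.refl Lc).exp_right).symm
    rwa [hexpC, ← hsA2] at h
  -- symmetry of X
  have key : sA * sB⁻¹ * Lc * sB * sA⁻¹ = sA⁻¹ * sB * Lc * sB⁻¹ * sA := by
    have h := congrArg (fun M => (sA⁻¹ * sB) * M * (sB * sA⁻¹)) hcomm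
    simp only [mul_assoc] at h ⊢
    simpa [Matrix.mul_inv_cancel_left_of_invertible,
      Matrix.inv_mul_cancel_left_of_invertible,
      Matrix.mul_inv_cancel_right_of_invertible,
      Matrix.inv_mul_cancel_right_of_invertible] using h
  have hXsa : IsSelfAdjoint X := by
    have : Xᴴ = X := by
      rw [Matrix.conjTranspose_eq_transpose_of_trivial, hXdef]
      simp only [Matrix.transpose_neg, Matrix.transpose_mul, Matrix.transpose_nonsing_inv,
        hsAT, hsBT, hLc.eq]
      rw [← key]
      noncomm_ring
    exact this
  have hL'sa : IsSelfAdjoint L' := by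
    have : L'ᴴ = L' := by
      rw [Matrix.conjTranspose_eq_transpose_of_trivial]; exact hL'
    exact this
  have hXL : L' = X := by
    have h2 := @CFC.log_exp (Matrix (Fin n) (Fin n) ℝ) _ _ _
      Matrix.IsHermitian.instContinuousFunctionalCalculus L' hL'sa
    have h3 := @CFC.log_exp (Matrix (Fin n) (Fin n) ℝ) _ _ _
      Matrix.IsHermitian.instContinuousFunctionalCalculus X hXsa
    exact h2.symm.trans ((congrArg (@CFC.log (Matrix (Fin n) (Fin n) ℝ) _ _ _
      Matrix.IsHermitian.instContinuousFunctionalCalculus) hexpX).symm.trans h3)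
  -- the derivative
  have hd := ((hasDerivAt_exp_smul_const' (𝕂 := ℝ) Lc (1 : ℝ)).const_mul sB).mul_const sB
  refine hd.congr_deriv ?_
  symm
  rw [one_smul]
  erw [hexpC]
  rw [hXL, hXdef]
  simp only [mul_neg, neg_mul, neg_neg]
  calc sA * (sA⁻¹ * sB * Lc * sB⁻¹ * sA) * sA
      = sB * (Lc * (sB⁻¹ * (sA * sA) * sB⁻¹)) * sB := by
        simp [mul_assoc, Matrix.mul_inv_cancel_left_of_invertible,
          Matrix.inv_mul_cancel_left_of_invertible,
          Matrix.mul_inv_cancel_right_of_invertible,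
          Matrix.inv_mul_cancel_right_of_invertible]
    _ = sB * (Lc * (sB⁻¹ * A * sB⁻¹)) * sB := by rw [hsA2]
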